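/- Let 0 < p < 1 and α ∈ ℕ ∪ (1/p − 1, ∞). Then the series ∑_{ν=0}^∞ |binom(α,ν)|^p converges, and consequently for any f ∈ L_p(𝕋) and any δ, the fractional difference Δ_δ^α f(x) = ∑_{ν=0}^∞ binom(α,ν)(−1)^ν f(x−νδ) satisfies ‖Δ_δ^α f‖_p^p ≤ C(α,p) ‖f‖_p^p. -/

import Mathlib

open MeasureTheory Real Filter
open scoped Classical

noncomputable section

/-- The L_p quasi-norm on the torus (period 2π). -/
def lpNorm (p : ℝ) (f : ℝ → ℂ) : ℝ :=
  ((1 / (2 * Real.pi)) * ∫ x in (0:ℝ)..(2 * Real.pi), ‖f x‖ ^ p) ^ (1 / p)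

/-- Membership in L_p(𝕋): 2π-periodic with integrable |f|^p on a period. -/
def InLp (p : ℝ) (f : ℝ → ℂ) : Prop :=
  Function.Periodic f (2 * Real.pi) ∧
    IntervalIntegrable (fun x => ‖f x‖ ^ p) volume 0 (2 * Real.pi)

/-- Generalized (fractional) binomial coefficient binom(α,ν). -/
def fracBinom (α : ℝ) : ℕ → ℝ
  | 0 => 1
  | n + 1 => fracBinom α n * (α - n) / (n + 1)

/-- Fractional difference Δ_δ^α f(x) = ∑ binom(α,ν)(−1)^ν f(x−νδ). -/
def fracDiff (α δ : ℝ) (f : ℝ → ℂ) (x : ℝ) : ℂ :=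
  ∑' ν : ℕ, (fracBinom α ν : ℂ) * (-1) ^ ν * f (x - ν * δ)

/-- Fractional modulus of smoothness ω_α(f,h)_p. -/
def modulus (α p : ℝ) (f : ℝ → ℂ) (h : ℝ) : ℝ :=
  sSup ((fun δ => lpNorm p (fracDiff α δ f)) '' {δ : ℝ | |δ| < h})

/-- Trigonometric polynomials of degree ≤ n. -/
def IsTrigPoly (n : ℕ) (T : ℝ → ℂ) : Prop :=
  ∃ c : ℤ → ℂ, T = fun x : ℝ => ∑ k ∈ Finset.Icc (-(n : ℤ)) (n : ℤ),
    c k * Complex.exp (Complex.I * k * (x : ℂ))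

/-- Best approximation E_n(f)_p. -/
def bestApprox (p : ℝ) (n : ℕ) (f : ℝ → ℂ) : ℝ :=
  sInf ((fun T => lpNorm p (fun x => f x - T x)) '' {T | IsTrigPoly n T})

/-- Fourier coefficient. -/
def fourierCoef (f : ℝ → ℂ) (k : ℤ) : ℂ :=
  (1 / (2 * Real.pi)) * ∫ x in (0:ℝ)..(2 * Real.pi), f x * Complex.exp (-(Complex.I * k * x))

/-- The Weyl multiplier (ik)^α = |k|^α e^{iαπ sign(k)/2} (0 for k = 0). -/
def weylMul (α : ℝ) (k : ℤ) : ℂ :=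
  if k = 0 then 0
  else ((|k| : ℝ) ^ α : ℝ) * Complex.exp (Complex.I * (α * Real.pi / 2) * (Int.sign k : ℂ))

/-- g is the Weyl fractional derivative of order α of f. -/
def HasWeylDeriv (α : ℝ) (f g : ℝ → ℂ) : Prop :=
  ∀ k : ℤ, fourierCoef g k = weylMul α k * fourierCoef f k

/-- g is the derivative of order α of f in the sense of L_p. -/
def HasLpDeriv (p α : ℝ) (f g : ℝ → ℂ) : Prop :=
  Tendsto (fun h : ℝ => lpNorm p (fun x => fracDiff α h f x / (h : ℂ) ^ (α : ℂ) - g x))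
    (nhdsWithin 0 (Set.Ioi 0)) (nhds 0)

/-- α ∈ ℕ ∪ (1/p−1, ∞). -/
def InFracSet (p α : ℝ) : Prop := (∃ m : ℕ, 0 < m ∧ α = m) ∨ α > 1 / p - 1

/-- σ_{α,p}(n) from Theorem propanal1. -/
def sigma' (α p : ℝ) (n : ℕ) : ℝ :=
  if (∃ m : ℕ, 0 < m ∧ α = m) ∨ α > 1 / p - 1 then (n : ℝ) ^ α
  else if α = 1 / p - 1 then (n : ℝ) ^ (1 / p - 1) * (Real.log (n + 1)) ^ (1 / p)
  else (n : ℝ) ^ (1 / p - 1)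

end



open scoped ENNReal

section Aux

/-- For `0 < p ≤ 1`, `(∑' c)^p ≤ ∑' c^p` in `ℝ≥0∞`. -/
lemma aux_tsum_rpow_le (c : ℕ → ℝ≥0∞) {p : ℝ} (hp : 0 < p) (hp1 : p ≤ 1) :
    (∑' n, c n) ^ p ≤ ∑' n, c n ^ p := by
  have hfin : ∀ s : Finset ℕ, (∑ i ∈ s, c i) ^ p ≤ ∑ i ∈ s, c i ^ p := by
    intro s
    induction s using Finset.induction with
    | empty => simp [ENNReal.zero_rpow_of_pos hp]
    | @insert a s ha ih =>
      rw [Finset.sum_insert ha, Finset.sum_insert ha]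
      exact le_trans (ENNReal.rpow_add_le_add_rpow _ _ hp.le hp1) (by gcongr)
  have h1 : Tendsto (fun n => (∑ i ∈ Finset.range n, c i) ^ p) atTop
      (nhds ((∑' n, c n) ^ p)) :=
    (ENNReal.continuous_rpow_const.tendsto _).comp (ENNReal.tendsto_nat_tsum c)
  exact le_of_tendsto h1 (Filter.Eventually.of_forall fun n =>
    (hfin _).trans (ENNReal.sum_le_tsum _))

lemma aux_fracBinom_succ (α : ℝ) (n : ℕ) :
    fracBinom α (n + 1) = fracBinom α n * (α - n) / (n + 1) := rfl

lemma aux_fracBinom_nat_zero (m : ℕ) {ν : ℕ} (h : m < ν) : fracBinom (m : ℝ) ν = 0 := by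
  induction ν with
  | zero => omega
  | succ n ih =>
    rcases Nat.lt_or_ge m n with h' | h'
    · rw [aux_fracBinom_succ, ih h', zero_mul, zero_div]
    · have hm : m = n := by omega
      subst hm
      rw [aux_fracBinom_succ, sub_self, mul_zero, zero_div]

lemma aux_fracBinom_decay (α : ℝ) (hα : 0 < α) (k : ℕ) :
    |fracBinom α (⌈α⌉₊ + k)| * ((⌈α⌉₊ + k : ℕ) : ℝ) ^ (α + 1) ≤
      |fracBinom α ⌈α⌉₊| * ((⌈α⌉₊ : ℕ) : ℝ) ^ (α + 1) := by
  induction k with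
  | zero => simp
  | succ k ih =>
    set n : ℕ := ⌈α⌉₊ + k with hn
    have hNα : α ≤ (n : ℝ) := by
      calc α ≤ (⌈α⌉₊ : ℝ) := Nat.le_ceil α
      _ ≤ (n : ℝ) := by exact_mod_cast Nat.le_add_right _ _
    have hn0 : (0:ℝ) ≤ (n:ℝ) := Nat.cast_nonneg n
    have hn1 : (0:ℝ) < (n:ℝ) + 1 := by positivity
    -- Bernoulli: (n-α)/(n+1) ≤ (n/(n+1))^(α+1)
    have hs : (-1 : ℝ) ≤ -(1/((n:ℝ)+1)) := by
      have h1 : 1/((n:ℝ)+1) ≤ 1 := by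
        rw [div_le_one hn1]; linarith
      linarith
    have key := one_add_mul_self_le_rpow_one_add hs (by linarith : (1:ℝ) ≤ α + 1)
    have hl : (1:ℝ) + (α+1) * -(1/((n:ℝ)+1)) = ((n:ℝ) - α)/((n:ℝ)+1) := by
      field_simp
      ring
    have hb : (1:ℝ) + -(1/((n:ℝ)+1)) = (n:ℝ)/((n:ℝ)+1) := by
      field_simp
      ring
    rw [hl, hb, Real.div_rpow hn0 hn1.le] at key
    -- rewrite the successor term
    have hcast : ((⌈α⌉₊ + (k+1) : ℕ) : ℝ) = (n:ℝ) + 1 := by push_cast [hn]; ring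
    have habs : |fracBinom α (n + 1)| = |fracBinom α n| * (((n:ℝ) - α) / ((n:ℝ)+1)) := by
      rw [aux_fracBinom_succ, abs_div, abs_mul, abs_of_nonneg (by linarith : (0:ℝ) ≤ (n:ℝ)+1),
        abs_sub_comm, abs_of_nonneg (by linarith : (0:ℝ) ≤ (n:ℝ) - α), mul_div_assoc]
    have hstep : (((n:ℝ) - α) / ((n:ℝ)+1)) * ((n:ℝ) + 1) ^ (α+1) ≤ (n:ℝ) ^ (α+1) := by
      have hpow : (0:ℝ) < ((n:ℝ)+1) ^ (α+1) := Real.rpow_pos_of_pos hn1 _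
      calc (((n:ℝ) - α) / ((n:ℝ)+1)) * ((n:ℝ) + 1) ^ (α+1)
          ≤ ((n:ℝ) ^ (α+1) / ((n:ℝ)+1) ^ (α+1)) * ((n:ℝ) + 1) ^ (α+1) := by
            exact mul_le_mul_of_nonneg_right key hpow.le
        _ = (n:ℝ) ^ (α+1) := div_mul_cancel₀ _ hpow.ne'
    have : ⌈α⌉₊ + (k+1) = n + 1 := by omega
    rw [hcast, this, habs, mul_assoc]
    calc |fracBinom α n| * ((((n:ℝ) - α) / ((n:ℝ)+1)) * ((n:ℝ)+1) ^ (α+1))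
        ≤ |fracBinom α n| * ((n:ℝ) ^ (α+1)) :=
          mul_le_mul_of_nonneg_left hstep (abs_nonneg _)
      _ ≤ |fracBinom α ⌈α⌉₊| * ((⌈α⌉₊:ℕ) : ℝ) ^ (α + 1) := ih


lemma aux_summable (p α : ℝ) (hp : 0 < p) (hα : 0 < α) (hαset : InFracSet p α) :
    Summable (fun ν : ℕ => |fracBinom α ν| ^ p) := by
  rcases hαset with ⟨m, _, rfl⟩ | hgt
  · -- α is a positive natural number: finitely many nonzero terms
    apply summable_of_ne_finset_zero (s := Finset.range (m + 1))
    intro ν hν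
    have hmν : m < ν := by simpa [Nat.lt_succ_iff, not_le] using
      (by simpa using hν : ¬ ν < m + 1)
    rw [aux_fracBinom_nat_zero m hmν, abs_zero, Real.zero_rpow hp.ne']
  · -- α > 1/p - 1
    set N : ℕ := ⌈α⌉₊ with hN
    have hN1 : 1 ≤ N := Nat.one_le_iff_ne_zero.mpr (Nat.ceil_pos.mpr hα).ne'
    set C : ℝ := |fracBinom α N| * ((N:ℕ) : ℝ) ^ (α + 1) with hC
    have hC0 : 0 ≤ C := mul_nonneg (abs_nonneg _) (Real.rpow_nonneg (Nat.cast_nonneg N) _)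
    have hexp : 1 < (α + 1) * p := by
      have h1 : 1 / p < α + 1 := by linarith
      have := mul_lt_mul_of_pos_right h1 hp
      rwa [one_div_mul_cancel hp.ne'] at this
    -- summable comparison series
    have hgsum : Summable (fun k : ℕ => C ^ p * ((k:ℝ) + 1) ^ (-((α + 1) * p))) := by
      apply Summable.mul_left
      have h0 : Summable (fun n : ℕ => (n:ℝ) ^ (-((α + 1) * p))) :=
        Real.summable_nat_rpow.mpr (by linarith)
      have h1 := (summable_nat_add_iff 1).mpr h0
      apply h1.congr
      intro n
      push_cast
      ring_nf
    rw [← summable_nat_add_iff N]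
    apply Summable.of_nonneg_of_le (fun k => Real.rpow_nonneg (abs_nonneg _) _) _ hgsum
    intro k
    have hkpos : (0:ℝ) < ((N + k : ℕ) : ℝ) := by
      have : 1 ≤ N + k := le_add_right hN1
      exact_mod_cast Nat.lt_of_lt_of_le Nat.zero_lt_one this
    have hxpow : (0:ℝ) < ((N + k : ℕ) : ℝ) ^ (α + 1) := Real.rpow_pos_of_pos hkpos _
    have hb : |fracBinom α (N + k)| ≤ C / ((N + k : ℕ) : ℝ) ^ (α + 1) :=
      (le_div_iff₀ hxpow).mpr (aux_fracBinom_decay α hα k)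
    have hk1 : ((k:ℝ) + 1) ≤ ((N + k : ℕ) : ℝ) := by
      push_cast
      have : (1:ℝ) ≤ (N:ℝ) := by exact_mod_cast hN1
      linarith
    have hk1pos : (0:ℝ) < (k:ℝ) + 1 := by positivity
    calc |fracBinom α (k + N)| ^ p
        = |fracBinom α (N + k)| ^ p := by rw [Nat.add_comm]
      _ ≤ (C / ((N + k : ℕ) : ℝ) ^ (α + 1)) ^ p :=
          Real.rpow_le_rpow (abs_nonneg _) hb hp.le
      _ ≤ (C / ((k:ℝ) + 1) ^ (α + 1)) ^ p := by
          apply Real.rpow_le_rpow (by positivity) _ hp.le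
          apply div_le_div_of_nonneg_left hC0 (Real.rpow_pos_of_pos hk1pos _)
          exact Real.rpow_le_rpow hk1pos.le hk1 (by linarith)
      _ = C ^ p * ((k:ℝ) + 1) ^ (-((α + 1) * p)) := by
          rw [Real.div_rpow hC0 (Real.rpow_nonneg hk1pos.le _),
            ← Real.rpow_mul hk1pos.le, Real.rpow_neg hk1pos.le, div_eq_mul_inv]


lemma aux_key_integral (p α : ℝ) (hp : 0 < p) (hp1 : p < 1)
    (hS : Summable (fun ν : ℕ => |fracBinom α ν| ^ p))
    (f : ℝ → ℂ) (hf : InLp p f) (δ : ℝ) :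
    ∫ x in (0:ℝ)..(2 * Real.pi), ‖fracDiff α δ f x‖ ^ p ≤
      (∑' ν : ℕ, |fracBinom α ν| ^ p) * ∫ x in (0:ℝ)..(2 * Real.pi), ‖f x‖ ^ p := by
  set T : ℝ := 2 * Real.pi with hTdef
  have hT : 0 < T := by have := Real.pi_pos; simp only [hTdef]; linarith
  set S : ℝ := ∑' ν : ℕ, |fracBinom α ν| ^ p with hSdef
  have hS0 : 0 ≤ S := tsum_nonneg fun ν => Real.rpow_nonneg (abs_nonneg _) _
  set G : ℝ → ℝ := fun x => ‖f x‖ ^ p with hGdef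
  have hGper : Function.Periodic G T := fun x => by simp only [hGdef]; rw [hf.1 x]
  have hGint : IntervalIntegrable G volume 0 T := hf.2
  have hIG : 0 ≤ ∫ x in (0:ℝ)..T, G x :=
    intervalIntegral.integral_nonneg hT.le fun u _ => Real.rpow_nonneg (norm_nonneg _) _
  by_cases hFint : IntervalIntegrable (fun x => ‖fracDiff α δ f x‖ ^ p) volume 0 T
  swap
  · rw [intervalIntegral.integral_undef hFint]
    exact mul_nonneg hS0 hIG
  set E : ℝ → ℝ≥0∞ := fun x => ENNReal.ofReal (G x) with hEdef
  have hEper : Function.Periodic E T := fun x => by simp only [hEdef]; rw [hGper x]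
  have hGm0 : AEMeasurable G (volume.restrict (Set.Ioc 0 T)) :=
    hGint.1.aestronglyMeasurable.aemeasurable
  have hGmv : AEMeasurable G volume := by
    have hcover : ⋃ n : ℤ, Set.Ioc ((0:ℝ) + n • T) (0 + (n + 1) • T) = Set.univ :=
      iUnion_Ioc_add_zsmul hT 0
    have hall : ∀ n : ℤ,
        AEMeasurable G (volume.restrict (Set.Ioc ((0:ℝ) + n • T) (0 + (n + 1) • T))) := by
      intro n
      have hτ : Measurable fun x : ℝ => x + (n:ℝ) * T := measurable_add_const _
      have hpre : (fun x : ℝ => x + (n:ℝ) * T) ⁻¹' Set.Ioc ((0:ℝ) + n • T) (0 + (n + 1) • T)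
          = Set.Ioc 0 T := by
        rw [Set.preimage_add_const_Ioc]
        congr 1 <;> simp [zsmul_eq_mul] <;> ring
      have hmap : Measure.map (fun x : ℝ => x + (n:ℝ) * T) (volume.restrict (Set.Ioc 0 T))
          = volume.restrict (Set.Ioc ((0:ℝ) + n • T) (0 + (n + 1) • T)) := by
        rw [← hpre, ← Measure.restrict_map hτ measurableSet_Ioc,
          map_add_right_eq_self volume _]
      have hemb : MeasurableEmbedding (fun x : ℝ => x + (n:ℝ) * T) :=
        (Homeomorph.addRight ((n:ℝ) * T)).measurableEmbedding
      rw [← hmap, hemb.aemeasurable_map_iff]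
      have hGcomp : (G ∘ fun x : ℝ => x + (n:ℝ) * T) = G := funext fun x => hGper.int_mul n x
      rw [hGcomp]; exact hGm0
    have := aemeasurable_iUnion_iff.mpr hall
    rwa [hcover, Measure.restrict_univ] at this
  have hEmv : AEMeasurable E volume := ENNReal.measurable_ofReal.comp_aemeasurable hGmv
  have hEshift : ∀ c : ℝ,
      (∫⁻ x in Set.Ioc (0:ℝ) T, E (x - c)) = ∫⁻ x in Set.Ioc (0:ℝ) T, E x := by
    intro c
    have hτ : Measurable fun x : ℝ => x + (-c) := measurable_add_const _
    have hpre : (fun x : ℝ => x + (-c)) ⁻¹' Set.Ioc (-c) (-c + T) = Set.Ioc 0 T := by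
      rw [Set.preimage_add_const_Ioc]; congr 1 <;> ring
    have hmap : Measure.map (fun x : ℝ => x + (-c)) (volume.restrict (Set.Ioc 0 T))
        = volume.restrict (Set.Ioc (-c) (-c + T)) := by
      rw [← hpre, ← Measure.restrict_map hτ measurableSet_Ioc,
        map_add_right_eq_self volume _]
    have h1 : (∫⁻ y in Set.Ioc (-c) (-c + T), E y) = ∫⁻ x in Set.Ioc (0:ℝ) T, E (x + (-c)) := by
      rw [← hmap]
      exact lintegral_map' (hmap ▸ hEmv.restrict) hτ.aemeasurable
    have h2 : (∫⁻ x in Set.Ioc (0:ℝ) T, E (x - c)) = ∫⁻ x in Set.Ioc (0:ℝ) T, E (x + (-c)) := by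
      simp_rw [sub_eq_add_neg]
    rw [h2, ← h1]
    haveI : MeasureTheory.VAddInvariantMeasure (AddSubgroup.zmultiples T) ℝ volume :=
      ⟨fun c s _ => measure_preimage_add _ _ _⟩
    have h3 := (isAddFundamentalDomain_Ioc hT (-c) volume).setLIntegral_eq
      (isAddFundamentalDomain_Ioc hT 0 volume) E (fun g x => hEper.map_vadd_zmultiples g x)
    simpa using h3
  have hIfin : (∫⁻ x in Set.Ioc (0:ℝ) T, E x) < ⊤ := hGint.1.lintegral_lt_top
  have hpoint : ∀ x : ℝ, ENNReal.ofReal (‖fracDiff α δ f x‖ ^ p) ≤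
      ∑' ν : ℕ, ENNReal.ofReal (|fracBinom α ν| ^ p) * E (x - ν * δ) := by
    intro x
    set z : ℕ → ℂ := fun ν => (fracBinom α ν : ℂ) * (-1) ^ ν * f (x - ν * δ) with hz
    have hfd : fracDiff α δ f x = ∑' ν, z ν := rfl
    by_cases hzs : Summable z
    · have hzn : Summable fun ν => ‖z ν‖ := summable_norm_iff.mpr hzs
      have h1 : ‖fracDiff α δ f x‖ ≤ ∑' ν, ‖z ν‖ := by
        rw [hfd]; exact norm_tsum_le_tsum_norm hzn
      calc ENNReal.ofReal (‖fracDiff α δ f x‖ ^ p)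
          ≤ ENNReal.ofReal ((∑' ν, ‖z ν‖) ^ p) :=
            ENNReal.ofReal_le_ofReal (Real.rpow_le_rpow (norm_nonneg _) h1 hp.le)
        _ = ENNReal.ofReal (∑' ν, ‖z ν‖) ^ p :=
            (ENNReal.ofReal_rpow_of_nonneg (tsum_nonneg fun ν => norm_nonneg (z ν)) hp.le).symm
        _ = (∑' ν, ENNReal.ofReal ‖z ν‖) ^ p := by
            rw [ENNReal.ofReal_tsum_of_nonneg (fun ν => norm_nonneg _) hzn]
        _ ≤ ∑' ν, ENNReal.ofReal ‖z ν‖ ^ p := aux_tsum_rpow_le _ hp hp1.le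
        _ = ∑' ν : ℕ, ENNReal.ofReal (|fracBinom α ν| ^ p) * E (x - ν * δ) := by
            refine tsum_congr fun ν => ?_
            have hn : ‖z ν‖ = |fracBinom α ν| * ‖f (x - ν * δ)‖ := by
              simp [hz, norm_mul, Complex.norm_real, Real.norm_eq_abs]
            rw [ENNReal.ofReal_rpow_of_nonneg (norm_nonneg (z ν)) hp.le, hn,
              Real.mul_rpow (abs_nonneg _) (norm_nonneg _),
              ENNReal.ofReal_mul (Real.rpow_nonneg (abs_nonneg _) _)]
    · rw [hfd, tsum_eq_zero_of_not_summable hzs]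
      simp [Real.zero_rpow hp.ne']
  have hEc : ∀ c : ℝ, AEMeasurable (fun x => E (x - c)) volume := by
    intro c
    have := hEmv.comp_quasiMeasurePreserving
      (measurePreserving_add_right volume (-c)).quasiMeasurePreserving
    simp only [sub_eq_add_neg]; exact this
  have hle : (∫⁻ x in Set.Ioc (0:ℝ) T, ENNReal.ofReal (‖fracDiff α δ f x‖ ^ p))
      ≤ ENNReal.ofReal S * ∫⁻ x in Set.Ioc (0:ℝ) T, E x := by
    have hm : ∀ ν : ℕ, AEMeasurable
        (fun x => ENNReal.ofReal (|fracBinom α ν| ^ p) * E (x - ν * δ))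
        (volume.restrict (Set.Ioc (0:ℝ) T)) :=
      fun ν => ((hEc ((ν:ℝ) * δ)).restrict).const_mul _
    calc (∫⁻ x in Set.Ioc (0:ℝ) T, ENNReal.ofReal (‖fracDiff α δ f x‖ ^ p))
        ≤ ∫⁻ x in Set.Ioc (0:ℝ) T,
            ∑' ν : ℕ, ENNReal.ofReal (|fracBinom α ν| ^ p) * E (x - ν * δ) :=
          lintegral_mono hpoint
      _ = ∑' ν : ℕ, ∫⁻ x in Set.Ioc (0:ℝ) T,
            ENNReal.ofReal (|fracBinom α ν| ^ p) * E (x - ν * δ) := lintegral_tsum hm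
      _ = ∑' ν : ℕ, ENNReal.ofReal (|fracBinom α ν| ^ p) *
            ∫⁻ x in Set.Ioc (0:ℝ) T, E (x - ν * δ) := by
          simp_rw [lintegral_const_mul' _ _ ENNReal.ofReal_ne_top]
      _ = ∑' ν : ℕ, ENNReal.ofReal (|fracBinom α ν| ^ p) *
            ∫⁻ x in Set.Ioc (0:ℝ) T, E x := by
          refine tsum_congr fun ν => ?_
          rw [hEshift]
      _ = ENNReal.ofReal S * ∫⁻ x in Set.Ioc (0:ℝ) T, E x := by
          rw [ENNReal.tsum_mul_right,
            ← ENNReal.ofReal_tsum_of_nonneg (fun ν => Real.rpow_nonneg (abs_nonneg _) _) hS]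
  have hF0 : (0:ℝ → ℝ) ≤ᵐ[volume.restrict (Set.Ioc (0:ℝ) T)]
      fun x => ‖fracDiff α δ f x‖ ^ p :=
    Filter.Eventually.of_forall fun x => Real.rpow_nonneg (norm_nonneg (fracDiff α δ f x)) p
  have hG0 : (0:ℝ → ℝ) ≤ᵐ[volume.restrict (Set.Ioc (0:ℝ) T)] G :=
    Filter.Eventually.of_forall fun x => Real.rpow_nonneg (norm_nonneg (f x)) p
  rw [intervalIntegral.integral_of_le hT.le, intervalIntegral.integral_of_le hT.le,
    integral_eq_lintegral_of_nonneg_ae hF0 hFint.1.aestronglyMeasurable,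
    integral_eq_lintegral_of_nonneg_ae hG0 hGint.1.aestronglyMeasurable]
  have hrhs_ne : ENNReal.ofReal S * (∫⁻ x in Set.Ioc (0:ℝ) T, E x) ≠ ⊤ :=
    ENNReal.mul_ne_top ENNReal.ofReal_ne_top hIfin.ne
  calc (∫⁻ x in Set.Ioc (0:ℝ) T, ENNReal.ofReal (‖fracDiff α δ f x‖ ^ p)).toReal
      ≤ (ENNReal.ofReal S * ∫⁻ x in Set.Ioc (0:ℝ) T, E x).toReal :=
        ENNReal.toReal_mono hrhs_ne hle
    _ = S * (∫⁻ x in Set.Ioc (0:ℝ) T, E x).toReal := by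
        rw [ENNReal.toReal_mul, ENNReal.toReal_ofReal hS0]

end Aux


theorem stmt1 (p α : ℝ) (hp : 0 < p) (hp1 : p < 1) (hα : 0 < α) (hαset : InFracSet p α) :
    Summable (fun ν : ℕ => |fracBinom α ν| ^ p) ∧
    ∃ C > 0, ∀ f : ℝ → ℂ, InLp p f → ∀ δ : ℝ,
      lpNorm p (fracDiff α δ f) ^ p ≤ C * lpNorm p f ^ p := by
  
  have hsum := aux_summable p α hp hα hαset
  refine ⟨hsum, (∑' ν : ℕ, |fracBinom α ν| ^ p), ?_, ?_⟩
  · have h00 : fracBinom α 0 = 1 := rfl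
    have h0 : |fracBinom α 0| ^ p = 1 := by rw [h00, abs_one, Real.one_rpow]
    have hle := Summable.le_tsum hsum 0 (fun ν _ => Real.rpow_nonneg (abs_nonneg _) _)
    rw [h0] at hle
    linarith
  · intro f hfLp δ
    have key := aux_key_integral p α hp hp1 hsum f hfLp δ
    have hpi := Real.pi_pos
    have hpow : ∀ g : ℝ → ℂ,
        lpNorm p g ^ p = (1 / (2 * Real.pi)) * ∫ x in (0:ℝ)..(2 * Real.pi), ‖g x‖ ^ p := by
      intro g
      have hbase : 0 ≤ (1 / (2 * Real.pi)) * ∫ x in (0:ℝ)..(2 * Real.pi), ‖g x‖ ^ p := by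
        apply mul_nonneg (by positivity)
        exact intervalIntegral.integral_nonneg (by positivity)
          fun u _ => Real.rpow_nonneg (norm_nonneg _) _
      rw [_root_.lpNorm, ← Real.rpow_mul hbase, one_div_mul_cancel hp.ne', Real.rpow_one]
    rw [hpow, hpow]
    calc (1 / (2 * Real.pi)) * ∫ x in (0:ℝ)..(2 * Real.pi), ‖fracDiff α δ f x‖ ^ p
        ≤ (1 / (2 * Real.pi)) * ((∑' ν : ℕ, |fracBinom α ν| ^ p) *
            ∫ x in (0:ℝ)..(2 * Real.pi), ‖f x‖ ^ p) :=
          mul_le_mul_of_nonneg_left key (by positivity)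
      _ = (∑' ν : ℕ, |fracBinom α ν| ^ p) *
            ((1 / (2 * Real.pi)) * ∫ x in (0:ℝ)..(2 * Real.pi), ‖f x‖ ^ p) := by ring
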